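/- In any binary tree, during a preorder (depth-first) traversal, the nodes of any subtree obtained by pruning at most two disjoint subtrees from a rooted subtree are visited in at most three contiguous ranges of preorder indices. -/

import Mathlib

open Filter Real

/-- Binary trees: empty (`leaf`) or a node with left and right subtrees. -/
inductive BinTree where
  | leaf : BinTree
  | node : BinTree → BinTree → BinTree
deriving DecidableEq, Repr

namespace BinTree

/-- Number of nodes. -/
def size : BinTree → ℕ
  | leaf => 0
  | node l r => l.size + r.size + 1

/-- Product of subtree sizes over all nodes: `∏_{v∈t} st(v)`. -/
def stProd : BinTree → ℕ
  | leaf => 1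
  | node l r => (node l r).size * l.stProd * r.stProd

/-- Subtree-size entropy: `H_st(t) = ∑_{v∈t} lg st(v)`. -/
noncomputable def stEntropy : BinTree → ℝ
  | leaf => 0
  | node l r => Real.logb 2 ((node l r).size : ℝ) + l.stEntropy + r.stEntropy

/-- Size of the left subtree of the root. -/
def leftSize : BinTree → ℕ
  | leaf => 0
  | node l _ => l.size

/-- Every node has at most one (nonempty) child. -/
def isPath : BinTree → Prop
  | leaf => True
  | node l r => (l = leaf ∨ r = leaf) ∧ l.isPath ∧ r.isPath

/-- At every node the sizes of the two subtrees differ by at most 1. -/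
def isBalanced : BinTree → Prop
  | leaf => True
  | node l r => ((l.size : ℤ) - (r.size : ℤ)).natAbs ≤ 1 ∧ l.isBalanced ∧ r.isBalanced

/-- Number of leaves (nodes with no children). -/
def leafCount : BinTree → ℕ
  | leaf => 0
  | node l r => (if l = leaf ∧ r = leaf then 1 else 0) + l.leafCount + r.leafCount

/-- Number of binary nodes (both children present). -/
def binCount : BinTree → ℕ
  | leaf => 0
  | node l r => (if l ≠ leaf ∧ r ≠ leaf then 1 else 0) + l.binCount + r.binCount

/-- Number of nodes with only a left child. -/
def leftOnlyCount : BinTree → ℕ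
  | leaf => 0
  | node l r => (if l ≠ leaf ∧ r = leaf then 1 else 0) + l.leftOnlyCount + r.leftOnlyCount

/-- Number of nodes with only a right child. -/
def rightOnlyCount : BinTree → ℕ
  | leaf => 0
  | node l r => (if l = leaf ∧ r ≠ leaf then 1 else 0) + l.rightOnlyCount + r.rightOnlyCount

end BinTree

/-- Cartesian tree construction with explicit fuel (fuel ≥ length suffices). -/
def cartesianAux : ℕ → List ℕ → BinTree
  | 0, _ => .leaf
  | _ + 1, [] => .leaf
  | fuel + 1, x :: xs =>
      let m := List.foldl min x xs
      let i := (x :: xs).idxOf m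
      .node (cartesianAux fuel ((x :: xs).take i)) (cartesianAux fuel ((x :: xs).drop (i + 1)))

/-- The Cartesian tree of a list: root at the (first) minimum, left/right
subtrees built recursively from the prefix/suffix. -/
def cartesian (l : List ℕ) : BinTree := cartesianAux l.length l

/-- The array `A[1..n]` (as a list) associated with a permutation of `Fin n`. -/
def permList {n : ℕ} (p : Equiv.Perm (Fin n)) : List ℕ := List.ofFn fun k => (p k : ℕ)

/-- All binary trees with exactly `n` nodes. -/
def treesOfSize : ℕ → Finset BinTree
  | 0 => {BinTree.leaf}
  | n + 1 =>
    (Finset.range (n + 1)).attach.biUnion fun i =>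
      ((treesOfSize i.1) ×ˢ (treesOfSize (n - i.1))).image fun p => BinTree.node p.1 p.2
termination_by n => n
decreasing_by
  · exact Nat.lt_succ_of_le (Nat.le_of_lt_succ (Finset.mem_range.mp i.2))
  · exact Nat.lt_succ_of_le (Nat.sub_le n i.1)

/-- Shannon entropy (base 2) of the random-BST shape distribution on `n` nodes,
which assigns probability `1/stProd t` to each tree `t` on `n` nodes. -/
noncomputable def shapeEntropy (n : ℕ) : ℝ :=
  - ∑ t ∈ treesOfSize n, (1 / (t.stProd : ℝ)) * Real.logb 2 (1 / (t.stProd : ℝ))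

/-- Expectation of `f` under the random-BST shape distribution on `n` nodes. -/
noncomputable def expCount (f : BinTree → ℕ) (n : ℕ) : ℝ :=
  ∑ t ∈ treesOfSize n, (1 / (t.stProd : ℝ)) * (f t : ℝ)

/-- The entropy recurrence: `H 0 = H 1 = 0`, `H n = lg n + (2/n) ∑_{i<n} H i`. -/
noncomputable def Hrec : ℕ → ℝ
  | 0 => 0
  | 1 => 0
  | n + 2 =>
      Real.logb 2 ((n + 2 : ℕ) : ℝ) +
        (2 / ((n + 2 : ℕ) : ℝ)) * ∑ i ∈ (Finset.range (n + 2)).attach, Hrec i.1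
termination_by n => n
decreasing_by exact Finset.mem_range.mp i.2

/-- `rmq_A(i,j)` (1-based): the position of the (first) minimum of `A[i..j]`. -/
def rmqFun (A : List ℕ) (i j : ℕ) : ℕ :=
  let s := (A.drop (i - 1)).take (j - i + 1)
  i + s.idxOf (List.foldl min (s.headD 0) s)

/-- The inorder rank of the LCA of the nodes with inorder ranks `i` and `j`. -/
def lcaInorder : BinTree → ℕ → ℕ → ℕ
  | .leaf, _, _ => 0
  | .node l r, i, j =>
      let m := l.size + 1
      if i < m ∧ j < m then lcaInorder l i j
      else if m < i ∧ m < j then m + lcaInorder r (i - m) (j - m)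
      else m

/-- The subtree rooted at the node reached from the root by the given
left(`false`)/right(`true`) directions, if it exists. -/
def subAt : BinTree → List Bool → Option BinTree
  | t, [] => some t
  | .leaf, _ :: _ => none
  | .node l _, false :: p => subAt l p
  | .node _ r, true :: p => subAt r p

/-- Subtree size of the node at a position (0 if there is no node there). -/
def stAt (t : BinTree) (pos : List Bool) : ℕ := ((subAt t pos).getD .leaf).size

/-- Left-subtree size of the node at a position. -/
def lsAt (t : BinTree) (pos : List Bool) : ℕ := ((subAt t pos).getD .leaf).leftSize

/-- `Pruned μ s`: `μ` is obtained from `s` by replacing some subtrees by `leaf`. -/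
inductive Pruned : BinTree → BinTree → Prop
  | leaf (t) : Pruned .leaf t
  | node {l' r' l r} : Pruned l' l → Pruned r' r → Pruned (.node l' r') (.node l r)

/-- `PrunedN k μ s`: `μ` is obtained from `s` by pruning exactly `k` (nonempty) subtrees. -/
inductive PrunedN : ℕ → BinTree → BinTree → Prop
  | refl (t) : PrunedN 0 t t
  | prune (l r) : PrunedN 1 .leaf (.node l r)
  | node {a b l' r' l r} : PrunedN a l' l → PrunedN b r' r → PrunedN (a + b) (.node l' r') (.node l r)

/-- `IsSubtree s t`: `s` is the subtree of `t` rooted at some node (or `t` itself). -/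
inductive IsSubtree : BinTree → BinTree → Prop
  | refl (t) : IsSubtree t t
  | left {s l r} : IsSubtree s l → IsSubtree s (.node l r)
  | right {s l r} : IsSubtree s r → IsSubtree s (.node l r)

/-- `∑_{v∈μ} lg st_s(v)`: sum over the nodes of `μ` of the log-subtree-sizes
taken in the host tree `s` (for `μ` pruned from `s`). -/
noncomputable def mixedEntropy : BinTree → BinTree → ℝ
  | .leaf, _ => 0
  | .node _ _, .leaf => 0
  | .node l' r', .node l r =>
      Real.logb 2 ((BinTree.node l r).size : ℝ) + mixedEntropy l' l + mixedEntropy r' r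

/-- 1-based preorder index of the node at a position (0 if no node there). -/
def preorderIdx : BinTree → List Bool → ℕ
  | _, [] => 1
  | .leaf, _ :: _ => 0
  | .node l _, false :: p => 1 + preorderIdx l p
  | .node l r, true :: p => 1 + l.size + preorderIdx r p

/-- 1-based inorder index of the node at a position. -/
def inorderIdx : BinTree → List Bool → ℕ
  | t, [] => t.leftSize + 1
  | .leaf, _ :: _ => 0
  | .node l _, false :: p => inorderIdx l p
  | .node l r, true :: p => l.size + 1 + inorderIdx r p

/-- Binary entropy function (base 2). -/
noncomputable def binH (x : ℝ) : ℝ := -x * Real.logb 2 x - (1 - x) * Real.logb 2 (1 - x)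
/-- Auxiliary: the set of preorder indices (computed in host `s`) of node
positions of `μ`. -/
def idxSet (s μ : BinTree) : Set ℕ :=
  {i | ∃ (pos : List Bool) (u : BinTree),
      subAt μ pos = some u ∧ u ≠ BinTree.leaf ∧ i = preorderIdx s pos}

lemma mem_image_add {c i : ℕ} {A : Set ℕ} :
    i ∈ (fun j => c + j) '' A ↔ c ≤ i ∧ i - c ∈ A := by
  constructor
  · rintro ⟨j, hj, hji⟩
    have hji' : c + j = i := hji
    have hj' : i - c = j := by omega
    exact ⟨by omega, by rwa [hj']⟩
  · rintro ⟨h1, h2⟩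
    exact ⟨i - c, h2, show c + (i - c) = i by omega⟩

lemma idxSet_leaf (s : BinTree) : idxSet s .leaf = ∅ := by
  ext i
  simp only [idxSet, Set.mem_setOf_eq, Set.mem_empty_iff_false, iff_false]
  rintro ⟨pos, u, h1, h2, -⟩
  cases pos with
  | nil => simp only [subAt, Option.some.injEq] at h1; exact h2 h1.symm
  | cons b p => simp [subAt] at h1

lemma idxSet_node (l r l' r' : BinTree) :
    idxSet (.node l r) (.node l' r') =
      {1} ∪ ((fun j => 1 + j) '' idxSet l l')
        ∪ ((fun j => 1 + l.size + j) '' idxSet r r') := by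
  ext i
  constructor
  · rintro ⟨pos, u, h1, h2, rfl⟩
    cases pos with
    | nil => left; left; rfl
    | cons b p =>
      cases b with
      | false =>
        left; right
        exact ⟨preorderIdx l p, ⟨p, u, by simpa [subAt] using h1, h2, rfl⟩, rfl⟩
      | true =>
        right
        exact ⟨preorderIdx r p, ⟨p, u, by simpa [subAt] using h1, h2, rfl⟩, rfl⟩
  · rintro ((rfl | ⟨j, ⟨p, u, h1, h2, rfl⟩, rfl⟩) | ⟨j, ⟨p, u, h1, h2, rfl⟩, rfl⟩)
    · exact ⟨[], .node l' r', rfl, by simp, rfl⟩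
    · exact ⟨false :: p, u, by simpa [subAt] using h1, h2, rfl⟩
    · exact ⟨true :: p, u, by simpa [subAt] using h1, h2, rfl⟩

lemma idxSet_self (s : BinTree) : idxSet s s = Set.Icc 1 s.size := by
  induction s with
  | leaf =>
    rw [idxSet_leaf]
    ext i
    simp only [Set.mem_empty_iff_false, Set.mem_Icc, BinTree.size, false_iff]
    omega
  | node l r ihl ihr =>
    rw [idxSet_node, ihl, ihr]
    ext i
    simp only [Set.mem_union, Set.mem_singleton_iff, mem_image_add, Set.mem_Icc,
      BinTree.size]
    omega

lemma key (k : ℕ) (μ s : BinTree) (hpr : PrunedN k μ s) :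
    k ≤ 2 →
    ∃ x1 y1 x2 y2 : ℕ,
      idxSet s μ = Set.Icc 1 s.size \ (Set.Icc x1 y1 ∪ Set.Icc x2 y2) ∧
      1 ≤ x1 ∧ x1 ≤ y1 + 1 ∧ y1 + 1 ≤ x2 ∧ x2 ≤ y2 + 1 ∧ y2 ≤ s.size ∧
      (k ≤ 1 → x2 = y2 + 1) ∧ (k = 0 → x1 = y1 + 1) := by
  induction hpr with
  | refl t =>
    intro _
    refine ⟨t.size + 1, t.size, t.size + 1, t.size, ?_, by omega, by omega, by omega,
      by omega, by omega, fun _ => rfl, fun _ => rfl⟩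
    rw [idxSet_self]
    ext i
    simp only [Set.mem_Icc, Set.mem_diff, Set.mem_union]
    omega
  | prune l r =>
    intro _
    refine ⟨1, (BinTree.node l r).size, (BinTree.node l r).size + 1,
      (BinTree.node l r).size, ?_, by omega, by omega, by omega,
      by omega, by omega, fun _ => rfl, by omega⟩
    rw [idxSet_leaf]
    ext i
    simp only [Set.mem_empty_iff_false, Set.mem_diff, Set.mem_union, Set.mem_Icc,
      false_iff]
    omega
  | @node a b l' r' l r ha hb iha ihb =>
    intro hk
    obtain ⟨xa, ya, xb, yb, hSl, p1, p2, p3, p4, p5, p6, p7⟩ := iha (by omega)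
    obtain ⟨xc, yc, xd, yd, hSr, q1, q2, q3, q4, q5, q6, q7⟩ := ihb (by omega)
    have ha2 : a ≤ 2 := by omega
    have hseteq : ∀ X1 Y1 X2 Y2 : ℕ,
        (∀ i : ℕ, ((i = 1 ∨ (1 ≤ i ∧ (1 ≤ i - 1 ∧ i - 1 ≤ l.size) ∧
            ¬((xa ≤ i - 1 ∧ i - 1 ≤ ya) ∨ (xb ≤ i - 1 ∧ i - 1 ≤ yb)))) ∨
          (1 + l.size ≤ i ∧ (1 ≤ i - (1 + l.size) ∧ i - (1 + l.size) ≤ r.size) ∧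
            ¬((xc ≤ i - (1 + l.size) ∧ i - (1 + l.size) ≤ yc) ∨
              (xd ≤ i - (1 + l.size) ∧ i - (1 + l.size) ≤ yd)))) ↔
          ((1 ≤ i ∧ i ≤ l.size + r.size + 1) ∧
            ¬((X1 ≤ i ∧ i ≤ Y1) ∨ (X2 ≤ i ∧ i ≤ Y2)))) →
        idxSet (BinTree.node l r) (BinTree.node l' r')
          = Set.Icc 1 (BinTree.node l r).size \ (Set.Icc X1 Y1 ∪ Set.Icc X2 Y2) := by
      intro X1 Y1 X2 Y2 h
      rw [idxSet_node, hSl, hSr]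
      ext i
      simp only [Set.mem_union, Set.mem_singleton_iff, mem_image_add, Set.mem_diff,
        Set.mem_Icc, BinTree.size]
      exact h i
    have hcases : (a = 0 ∧ b = 0) ∨ (a = 0 ∧ b = 1) ∨ (a = 0 ∧ b = 2) ∨
        (a = 1 ∧ b = 0) ∨ (a = 1 ∧ b = 1) ∨ (a = 2 ∧ b = 0) := by omega
    rcases hcases with ⟨rfl, rfl⟩ | ⟨rfl, rfl⟩ | ⟨rfl, rfl⟩ | ⟨rfl, rfl⟩ | ⟨rfl, rfl⟩ | ⟨rfl, rfl⟩
    · have e1 := p7 rfl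
      have e2 := p6 (by omega)
      -- (0,0)
      have f1 := q7 rfl
      have f2 := q6 (by omega)
      set n := (BinTree.node l r).size with hn
      have hn' : n = l.size + r.size + 1 := rfl
      exact ⟨n + 1, n, n + 1, n,
        hseteq _ _ _ _ (fun i => by omega), by omega, by omega, by omega, by omega,
        by omega, fun _ => rfl, fun _ => rfl⟩
    · -- (0,1)
      have e1 := p7 rfl
      have e2 := p6 (by omega)
      have f2 := q6 (by omega)
      set n := (BinTree.node l r).size with hn
      have hn' : n = l.size + r.size + 1 := rfl
      exact ⟨xc + l.size + 1, yc + l.size + 1, n + 1, n,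
        hseteq _ _ _ _ (fun i => by omega), by omega, by omega, by omega, by omega,
        by omega, fun _ => rfl, by omega⟩
    · -- (0,2)
      have e1 := p7 rfl
      have e2 := p6 (by omega)
      set n := (BinTree.node l r).size with hn
      have hn' : n = l.size + r.size + 1 := rfl
      exact ⟨xc + l.size + 1, yc + l.size + 1, xd + l.size + 1, yd + l.size + 1,
        hseteq _ _ _ _ (fun i => by omega), by omega, by omega, by omega, by omega,
        by omega, by omega, by omega⟩
    · -- (1,0)
      have e2 := p6 (by omega)
      have f1 := q7 rfl
      have f2 := q6 (by omega)
      set n := (BinTree.node l r).size with hn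
      have hn' : n = l.size + r.size + 1 := rfl
      exact ⟨xa + 1, ya + 1, n + 1, n,
        hseteq _ _ _ _ (fun i => by omega), by omega, by omega, by omega, by omega,
        by omega, fun _ => rfl, by omega⟩
    · -- (1,1)
      have e2 := p6 (by omega)
      have f2 := q6 (by omega)
      set n := (BinTree.node l r).size with hn
      have hn' : n = l.size + r.size + 1 := rfl
      exact ⟨xa + 1, ya + 1, xc + l.size + 1, yc + l.size + 1,
        hseteq _ _ _ _ (fun i => by omega), by omega, by omega, by omega, by omega,
        by omega, by omega, by omega⟩
    · -- (2,0)
      have f1 := q7 rfl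
      have f2 := q6 (by omega)
      set n := (BinTree.node l r).size with hn
      have hn' : n = l.size + r.size + 1 := rfl
      exact ⟨xa + 1, ya + 1, xb + 1, yb + 1,
        hseteq _ _ _ _ (fun i => by omega), by omega, by omega, by omega, by omega,
        by omega, by omega, by omega⟩

lemma preorderIdx_append (q : List Bool) : ∀ (t s : BinTree), subAt t q = some s →
    ∀ pos : List Bool,
      preorderIdx t (q ++ pos) + 1 = preorderIdx t q + preorderIdx s pos := by
  induction q with
  | nil =>
    intro t s h pos
    simp only [subAt, Option.some.injEq] at h
    subst h
    simp [preorderIdx]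
    omega
  | cons b q ih =>
    intro t s h pos
    cases t with
    | leaf => simp [subAt] at h
    | node l r =>
      cases b with
      | false =>
        simp only [subAt] at h
        have := ih l s h pos
        show 1 + preorderIdx l (q ++ pos) + 1 = 1 + preorderIdx l q + preorderIdx s pos
        omega
      | true =>
        simp only [subAt] at h
        have := ih r s h pos
        show 1 + l.size + preorderIdx r (q ++ pos) + 1
            = 1 + l.size + preorderIdx r q + preorderIdx s pos
        omega

lemma one_le_preorderIdx (q : List Bool) : ∀ (t s : BinTree), subAt t q = some s →
    1 ≤ preorderIdx t q := by
  induction q with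
  | nil => intro t s h; simp [preorderIdx]
  | cons b q ih =>
    intro t s h
    cases t with
    | leaf => simp [subAt] at h
    | node l r =>
      cases b with
      | false =>
        simp only [subAt] at h
        have := ih l s h
        simp only [preorderIdx]; omega
      | true =>
        simp only [subAt] at h
        have := ih r s h
        simp only [preorderIdx]; omega

/-- If `μ` is obtained from the rooted subtree `s` of `t` (located at position
`q` in `t`) by pruning at most two subtrees, then the preorder indices (in `t`)
of the nodes of `μ` form a union of at most three intervals of consecutive
integers. -/
theorem stmt17 (t s μ : BinTree) (q : List Bool) (k : ℕ)
    (hq : subAt t q = some s) (hpr : PrunedN k μ s) (hk : k ≤ 2) :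
    ∃ a1 b1 a2 b2 a3 b3 : ℕ,
      {i : ℕ | ∃ (pos : List Bool) (u : BinTree),
          subAt μ pos = some u ∧ u ≠ BinTree.leaf ∧ i = preorderIdx t (q ++ pos)}
        = Set.Icc a1 b1 ∪ Set.Icc a2 b2 ∪ Set.Icc a3 b3 := by
  obtain ⟨x1, y1, x2, y2, hS, c1, c2, c3, c4, c5, -, -⟩ := key k μ s hpr hk
  have hc1 : 1 ≤ preorderIdx t q := one_le_preorderIdx q t s hq
  set c := preorderIdx t q with hc
  refine ⟨c - 1 + 1, c - 1 + (x1 - 1), c - 1 + (y1 + 1), c - 1 + (x2 - 1),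
          c - 1 + (y2 + 1), c - 1 + s.size, ?_⟩
  have hset : {i : ℕ | ∃ (pos : List Bool) (u : BinTree),
      subAt μ pos = some u ∧ u ≠ BinTree.leaf ∧ i = preorderIdx t (q ++ pos)}
      = (fun j => (c - 1) + j) '' idxSet s μ := by
    ext i
    simp only [Set.mem_setOf_eq, mem_image_add, idxSet]
    constructor
    · rintro ⟨pos, u, h1, h2, rfl⟩
      have hap := preorderIdx_append q t s hq pos
      exact ⟨by omega, pos, u, h1, h2, by omega⟩
    · rintro ⟨hci, pos, u, h1, h2, h3⟩
      have hap := preorderIdx_append q t s hq pos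
      exact ⟨pos, u, h1, h2, by omega⟩
  rw [hset, hS]
  have hdecomp : Set.Icc 1 s.size \ (Set.Icc x1 y1 ∪ Set.Icc x2 y2)
      = Set.Icc 1 (x1 - 1) ∪ Set.Icc (y1 + 1) (x2 - 1) ∪ Set.Icc (y2 + 1) s.size := by
    ext i
    simp only [Set.mem_diff, Set.mem_union, Set.mem_Icc]
    omega
  have himg : ∀ a b : ℕ,
      (fun j => (c - 1) + j) '' Set.Icc a b = Set.Icc (c - 1 + a) (c - 1 + b) := by
    intro a b
    ext i
    simp only [mem_image_add, Set.mem_Icc]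
    omega
  rw [hdecomp, Set.image_union, Set.image_union, himg, himg, himg]
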